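/- Let c ≥ 1 and a > 0 be fixed, and set κ = 3/(4c) − 1 and ω_λ(x) := (1 + (λ^κ | |x|_c^c − λ|)^{10})^{−1} for x ∈ ℝ³ and λ ≥ 1, where |x|_c^c := |x₁|^c + |x₂|^c + |x₃|^c. Then there is a constant C = C(c,a) ≥ 1 such that C^{−1} ω_λ(t+γ) ≤ ω_λ(t) ≤ C ω_λ(t+γ) for all λ ≥ 1 and all t, γ ∈ ℝ³ with max(|γ₁|,|γ₂|,|γ₃|) ≤ a. -/
import Mathlib


open Real


lemma rpow_sub_rpow_le' {c x y : ℝ} (hc : 1 ≤ c) (hx : 0 ≤ x) (hxy : x ≤ y) :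
    y ^ c - x ^ c ≤ c * y ^ (c - 1) * (y - x) := by
  rcases eq_or_lt_of_le hxy with rfl | h
  · simp only [sub_self, mul_zero, le_refl]
  · obtain ⟨ξ, hξ, hs⟩ := exists_hasDerivAt_eq_slope (fun t : ℝ => t ^ c)
      (fun t : ℝ => c * t ^ (c - 1)) h
      (fun z _ => (Real.continuousAt_rpow_const z c (Or.inr (by linarith))).continuousWithinAt)
      (fun z _ => Real.hasDerivAt_rpow_const (Or.inr hc))
    have hξ0 : 0 ≤ ξ := le_of_lt (lt_of_le_of_lt hx hξ.1)
    have hmono : ξ ^ (c - 1) ≤ y ^ (c - 1) :=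
      Real.rpow_le_rpow hξ0 hξ.2.le (by linarith)
    have hc0 : (0:ℝ) ≤ c := by linarith
    have hne : y - x ≠ 0 := sub_ne_zero.mpr (ne_of_gt h)
    have heq : y ^ c - x ^ c = c * ξ ^ (c - 1) * (y - x) := by
      rw [eq_div_iff hne] at hs
      linarith [hs]
    rw [heq]
    have := mul_le_mul_of_nonneg_right
      (mul_le_mul_of_nonneg_left hmono hc0) (sub_nonneg.mpr hxy)
    linarith

/-- Per-coordinate shift bound. -/
lemma abs_rpow_shift {c a x g : ℝ} (hc : 1 ≤ c) (ha : 0 ≤ a) (hg : |g| ≤ a) :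
    |(|x + g|) ^ c - (|x|) ^ c| ≤ c * (|x| + a) ^ (c - 1) * a := by
  set u := |x + g| with hu
  set v := |x| with hv
  have hu0 : 0 ≤ u := abs_nonneg _
  have hv0 : 0 ≤ v := abs_nonneg _
  have h1 : u ≤ v + a := by
    calc u = |x + g| := rfl
    _ ≤ |x| + |g| := abs_add_le _ _
    _ ≤ v + a := by simp [hv]; linarith
  have h2 : v ≤ u + a := by
    have : |x| = |(x + g) + (-g)| := by ring_nf
    rw [hv, this]
    calc |(x + g) + (-g)| ≤ |x + g| + |(-g)| := abs_add_le _ _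
    _ ≤ u + a := by rw [abs_neg]; linarith
  have hvpa : v ^ (c-1) ≤ (v + a) ^ (c-1) := Real.rpow_le_rpow hv0 (by linarith) (by linarith)
  rcases le_total u v with huv | huv
  · have hle : u ^ c ≤ v ^ c := Real.rpow_le_rpow hu0 huv (by linarith)
    rw [abs_of_nonpos (by linarith)]
    have := rpow_sub_rpow_le' hc hu0 huv
    have hmono : v ^ (c-1) ≤ (v + a) ^ (c-1) := hvpa
    have hgap : v - u ≤ a := by linarith
    have hcnn : (0:ℝ) ≤ c := by linarith
    have p1 : v ^ (c-1) * (v - u) ≤ (v + a) ^ (c-1) * a :=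
      mul_le_mul hmono hgap (sub_nonneg.mpr huv) (Real.rpow_nonneg (by linarith) _)
    have p2 := mul_le_mul_of_nonneg_left p1 hcnn
    nlinarith [p2]
  · have hle : v ^ c ≤ u ^ c := Real.rpow_le_rpow hv0 huv (by linarith)
    rw [abs_of_nonneg (by linarith)]
    have := rpow_sub_rpow_le' hc hv0 huv
    have hmono : u ^ (c-1) ≤ (v + a) ^ (c-1) := Real.rpow_le_rpow hu0 h1 (by linarith)
    have hgap : u - v ≤ a := by linarith
    have hcnn : (0:ℝ) ≤ c := by linarith
    have p1 : u ^ (c-1) * (u - v) ≤ (v + a) ^ (c-1) * a :=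
      mul_le_mul hmono hgap (sub_nonneg.mpr huv) (Real.rpow_nonneg (by linarith) _)
    have p2 := mul_le_mul_of_nonneg_left p1 hcnn
    nlinarith [p2]

/-- `(|x|+a)^c ≤ (1+a)^c (|x|^c + 1)`. -/
lemma shift_growth {c a x : ℝ} (hc : 1 ≤ c) (ha : 0 ≤ a) :
    (|x| + a) ^ c ≤ (1 + a) ^ c * ((|x|) ^ c + 1) := by
  have hx0 : (0:ℝ) ≤ |x| := abs_nonneg _
  have h1a : (0:ℝ) ≤ 1 + a := by linarith
  have hc0 : (0:ℝ) ≤ c := by linarith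
  rcases le_total (|x|) 1 with h | h
  · have : (|x| + a) ^ c ≤ (1 + a) ^ c :=
      Real.rpow_le_rpow (by linarith) (by linarith) hc0
    have h2 : (1:ℝ) ≤ |x| ^ c + 1 := by
      have := Real.rpow_nonneg hx0 c; linarith
    nlinarith [Real.rpow_nonneg h1a c]
  · have key : |x| + a ≤ (1 + a) * |x| := by nlinarith
    have : (|x| + a) ^ c ≤ ((1 + a) * |x|) ^ c :=
      Real.rpow_le_rpow (by linarith) key hc0
    rw [Real.mul_rpow h1a hx0] at this
    have h2 : (1 + a) ^ c * |x| ^ c ≤ (1 + a) ^ c * (|x| ^ c + 1) := by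
      have := Real.rpow_nonneg h1a c; nlinarith
    linarith

/-- Near the sphere: `λ^κ (|x|+a)^{c-1} ≤ 2(1+a)^{c-1}` when `|x|^c ≤ 2λ`. -/
lemma coord_bound {c a lam x : ℝ} (hc : 1 ≤ c) (ha : 0 ≤ a) (hlam : 1 ≤ lam)
    (hx : |x| ^ c ≤ 2 * lam) :
    lam ^ (3 / (4 * c) - 1) * (|x| + a) ^ (c - 1) ≤ 2 * (1 + a) ^ (c - 1) := by
  have hc0 : (0:ℝ) < c := by linarith
  have hlam0 : (0:ℝ) < lam := by linarith
  have h2l : (1:ℝ) ≤ 2 * lam := by linarith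
  have hx0 : (0:ℝ) ≤ |x| := abs_nonneg _
  -- |x| ≤ (2λ)^(1/c)
  have hxle : |x| ≤ (2 * lam) ^ c⁻¹ := by
    have := Real.rpow_le_rpow (Real.rpow_nonneg hx0 c) hx (inv_nonneg.mpr hc0.le)
    rwa [Real.rpow_rpow_inv hx0 (ne_of_gt hc0)] at this
  have hone : (1:ℝ) ≤ (2 * lam) ^ c⁻¹ := Real.one_le_rpow h2l (inv_nonneg.mpr hc0.le)
  have hsum : |x| + a ≤ (1 + a) * (2 * lam) ^ c⁻¹ := by nlinarith
  have hstep : (|x| + a) ^ (c - 1) ≤ (1 + a) ^ (c - 1) * ((2 * lam) ^ c⁻¹) ^ (c - 1) := by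
    have := Real.rpow_le_rpow (by linarith : (0:ℝ) ≤ |x| + a) hsum (by linarith : (0:ℝ) ≤ c - 1)
    rwa [Real.mul_rpow (by linarith) (by positivity)] at this
  have hre : ((2 * lam) ^ c⁻¹) ^ (c - 1) = 2 ^ (c⁻¹ * (c-1)) * lam ^ (c⁻¹ * (c-1)) := by
    rw [← Real.rpow_mul (by linarith), Real.mul_rpow (by norm_num) hlam0.le]
  have h2e : (2:ℝ) ^ (c⁻¹ * (c-1)) ≤ 2 := by
    nth_rewrite 2 [show (2:ℝ) = 2 ^ (1:ℝ) by norm_num]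
    apply Real.rpow_le_rpow_of_exponent_le (by norm_num)
    rw [inv_mul_eq_div, div_le_one hc0]; linarith
  have hlame : lam ^ (3 / (4 * c) - 1) * lam ^ (c⁻¹ * (c-1)) ≤ 1 := by
    rw [← Real.rpow_add hlam0]
    apply Real.rpow_le_one_of_one_le_of_nonpos hlam
    have : 3 / (4 * c) - 1 + c⁻¹ * (c - 1) = -(1 / (4 * c)) := by
      field_simp; ring
    rw [this]
    simp only [neg_nonpos]
    positivity
  -- combine
  have hm0 : (0:ℝ) < lam ^ (3 / (4 * c) - 1) := Real.rpow_pos_of_pos hlam0 _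
  have h1a : (0:ℝ) ≤ (1 + a) ^ (c - 1) := Real.rpow_nonneg (by linarith) _
  calc lam ^ (3 / (4 * c) - 1) * (|x| + a) ^ (c - 1)
      ≤ lam ^ (3 / (4 * c) - 1) * ((1 + a) ^ (c - 1) * ((2 * lam) ^ c⁻¹) ^ (c - 1)) :=
        mul_le_mul_of_nonneg_left hstep hm0.le
    _ = (1 + a) ^ (c - 1) * (2 ^ (c⁻¹ * (c-1)) * (lam ^ (3 / (4 * c) - 1) * lam ^ (c⁻¹ * (c-1)))) := by
        rw [hre]; ring
    _ ≤ (1 + a) ^ (c - 1) * (2 * 1) := by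
        apply mul_le_mul_of_nonneg_left _ h1a
        apply mul_le_mul h2e hlame (by positivity) (by norm_num)
    _ = 2 * (1 + a) ^ (c - 1) := by ring

noncomputable def sN (c : ℝ) (x : ℝ × ℝ × ℝ) : ℝ := |x.1| ^ c + |x.2.1| ^ c + |x.2.2| ^ c

lemma sN_nonneg (c : ℝ) (x : ℝ × ℝ × ℝ) : 0 ≤ sN c x := by
  unfold sN
  have h1 := Real.rpow_nonneg (abs_nonneg x.1) c
  have h2 := Real.rpow_nonneg (abs_nonneg x.2.1) c
  have h3 := Real.rpow_nonneg (abs_nonneg x.2.2) c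
  linarith

set_option maxHeartbeats 1000000 in
/-- The key one-sided estimate. -/
lemma key_est (c a : ℝ) (hc : 1 ≤ c) (ha : 0 < a) :
    ∃ K : ℝ, 1 ≤ K ∧ ∀ lam : ℝ, 1 ≤ lam → ∀ t γ : ℝ × ℝ × ℝ,
      max |γ.1| (max |γ.2.1| |γ.2.2|) ≤ a →
      lam ^ (3 / (4 * c) - 1) * |sN c (t + γ) - lam| ≤
        K * (1 + lam ^ (3 / (4 * c) - 1) * |sN c t - lam|) := by
  have hc0 : (0:ℝ) < c := by linarith
  have h1a : (0:ℝ) ≤ (1 + a) ^ (c - 1) := Real.rpow_nonneg (by linarith) _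
  have h1ac : (0:ℝ) ≤ (1 + a) ^ c := Real.rpow_nonneg (by linarith) _
  have haux1 : (0:ℝ) ≤ 6 * c * a * (1 + a) ^ (c - 1) := by positivity
  refine ⟨1 + 6 * c * a * (1 + a) ^ (c - 1) + (5 * (1 + a) ^ c + 1),
    by linarith [haux1, h1ac], ?_⟩
  intro lam hlam t γ hγ
  have hlam0 : (0:ℝ) < lam := by linarith
  set m := lam ^ (3 / (4 * c) - 1) with hm
  have hm0 : (0:ℝ) < m := Real.rpow_pos_of_pos hlam0 _
  have hm1 : m ≤ 1 := Real.rpow_le_one_of_one_le_of_nonpos hlam (by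
    have : 3 / (4 * c) ≤ 3 / (4 * 1) := by
      apply div_le_div_of_nonneg_left (by norm_num) (by norm_num) (by linarith)
    linarith)
  have hγ1 : |γ.1| ≤ a := le_trans (le_max_left _ _) hγ
  have hγ2 : |γ.2.1| ≤ a := le_trans (le_trans (le_max_left _ _) (le_max_right _ _)) hγ
  have hγ3 : |γ.2.2| ≤ a := le_trans (le_trans (le_max_right _ _) (le_max_right _ _)) hγ
  have hadd1 : (t + γ).1 = t.1 + γ.1 := rfl
  have hadd2 : (t + γ).2.1 = t.2.1 + γ.2.1 := rfl
  have hadd3 : (t + γ).2.2 = t.2.2 + γ.2.2 := rfl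
  set u := m * |sN c t - lam| with hu
  have hu0 : 0 ≤ u := mul_nonneg hm0.le (abs_nonneg _)
  rcases le_total (sN c t) (2 * lam) with hcase | hcase
  · -- near case: |Δ sN| small after weighting
    have hb1 := abs_rpow_shift (a := a) (x := t.1) (g := γ.1) hc ha.le hγ1
    have hb2 := abs_rpow_shift (a := a) (x := t.2.1) (g := γ.2.1) hc ha.le hγ2
    have hb3 := abs_rpow_shift (a := a) (x := t.2.2) (g := γ.2.2) hc ha.le hγ3
    have hΔ : |sN c (t + γ) - sN c t| ≤
        c * (|t.1| + a) ^ (c-1) * a + c * (|t.2.1| + a) ^ (c-1) * a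
          + c * (|t.2.2| + a) ^ (c-1) * a := by
      unfold sN
      rw [hadd1, hadd2, hadd3]
      have habs : |(|t.1 + γ.1| ^ c + |t.2.1 + γ.2.1| ^ c + |t.2.2 + γ.2.2| ^ c)
          - (|t.1| ^ c + |t.2.1| ^ c + |t.2.2| ^ c)| ≤
          |(|t.1 + γ.1|) ^ c - (|t.1|) ^ c| + |(|t.2.1 + γ.2.1|) ^ c - (|t.2.1|) ^ c|
            + |(|t.2.2 + γ.2.2|) ^ c - (|t.2.2|) ^ c| := by
        have := abs_add_le ((|t.1 + γ.1| ^ c - |t.1| ^ c) + (|t.2.1 + γ.2.1| ^ c - |t.2.1| ^ c))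
          (|t.2.2 + γ.2.2| ^ c - |t.2.2| ^ c)
        have h2 := abs_add_le (|t.1 + γ.1| ^ c - |t.1| ^ c) (|t.2.1 + γ.2.1| ^ c - |t.2.1| ^ c)
        calc |(|t.1 + γ.1| ^ c + |t.2.1 + γ.2.1| ^ c + |t.2.2 + γ.2.2| ^ c)
            - (|t.1| ^ c + |t.2.1| ^ c + |t.2.2| ^ c)|
            = |((|t.1 + γ.1| ^ c - |t.1| ^ c) + (|t.2.1 + γ.2.1| ^ c - |t.2.1| ^ c))
              + (|t.2.2 + γ.2.2| ^ c - |t.2.2| ^ c)| := by ring_nf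
          _ ≤ _ := by linarith
      linarith
    -- coordinate bounds
    have hx1 : |t.1| ^ c ≤ 2 * lam := by
      have h2 := Real.rpow_nonneg (abs_nonneg t.2.1) c
      have h3 := Real.rpow_nonneg (abs_nonneg t.2.2) c
      unfold sN at hcase; linarith
    have hx2 : |t.2.1| ^ c ≤ 2 * lam := by
      have h2 := Real.rpow_nonneg (abs_nonneg t.1) c
      have h3 := Real.rpow_nonneg (abs_nonneg t.2.2) c
      unfold sN at hcase; linarith
    have hx3 : |t.2.2| ^ c ≤ 2 * lam := by
      have h2 := Real.rpow_nonneg (abs_nonneg t.1) c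
      have h3 := Real.rpow_nonneg (abs_nonneg t.2.1) c
      unfold sN at hcase; linarith
    have hcb1 := coord_bound (a := a) hc ha.le hlam hx1
    have hcb2 := coord_bound (a := a) hc ha.le hlam hx2
    have hcb3 := coord_bound (a := a) hc ha.le hlam hx3
    -- m * |Δ| ≤ 6 c a (1+a)^{c-1}
    have hkey : m * |sN c (t + γ) - sN c t| ≤ 6 * c * a * (1 + a) ^ (c - 1) := by
      have := mul_le_mul_of_nonneg_left hΔ hm0.le
      have e1 : m * (c * (|t.1| + a) ^ (c-1) * a) ≤ c * a * (2 * (1 + a) ^ (c-1)) := by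
        have := mul_le_mul_of_nonneg_left hcb1 (by positivity : (0:ℝ) ≤ c * a)
        calc m * (c * (|t.1| + a) ^ (c-1) * a) = c * a * (m * (|t.1| + a) ^ (c-1)) := by
              rw [hm]; ring
          _ ≤ _ := by rw [hm] at *; linarith
      have e2 : m * (c * (|t.2.1| + a) ^ (c-1) * a) ≤ c * a * (2 * (1 + a) ^ (c-1)) := by
        have := mul_le_mul_of_nonneg_left hcb2 (by positivity : (0:ℝ) ≤ c * a)
        calc m * (c * (|t.2.1| + a) ^ (c-1) * a) = c * a * (m * (|t.2.1| + a) ^ (c-1)) := by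
              rw [hm]; ring
          _ ≤ _ := by rw [hm] at *; linarith
      have e3 : m * (c * (|t.2.2| + a) ^ (c-1) * a) ≤ c * a * (2 * (1 + a) ^ (c-1)) := by
        have := mul_le_mul_of_nonneg_left hcb3 (by positivity : (0:ℝ) ≤ c * a)
        calc m * (c * (|t.2.2| + a) ^ (c-1) * a) = c * a * (m * (|t.2.2| + a) ^ (c-1)) := by
              rw [hm]; ring
          _ ≤ _ := by rw [hm] at *; linarith
      nlinarith [this]
    have htri : |sN c (t + γ) - lam| ≤ |sN c (t + γ) - sN c t| + |sN c t - lam| := by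
      have := abs_add_le (sN c (t + γ) - sN c t) (sN c t - lam)
      simpa using this
    have : m * |sN c (t + γ) - lam| ≤ u + 6 * c * a * (1 + a) ^ (c - 1) := by
      have := mul_le_mul_of_nonneg_left htri hm0.le
      rw [mul_add] at this
      linarith
    have hD : (0:ℝ) ≤ 5 * (1 + a) ^ c + 1 := by linarith
    have hexp : (1 + 6 * c * a * (1 + a) ^ (c - 1) + (5 * (1 + a) ^ c + 1)) * (1 + u)
        = 1 + u + 6 * c * a * (1 + a) ^ (c - 1) + (5 * (1 + a) ^ c + 1)
          + (6 * c * a * (1 + a) ^ (c - 1) + (5 * (1 + a) ^ c + 1)) * u := by ring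
    have hnn := mul_nonneg (add_nonneg haux1 hD) hu0
    linarith [this]
  · -- far case: sN c t > 2λ (≥), direct domination
    have hfar : lam ≤ sN c t - lam := by linarith
    have huval : u = m * (sN c t - lam) := by
      rw [hu, abs_of_nonneg (by linarith)]
    -- sN(t+γ) ≤ (1+a)^c (sN t + 3)
    have hg1 : (|t.1 + γ.1|) ^ c ≤ (1 + a) ^ c * ((|t.1|) ^ c + 1) := by
      have h1 : |t.1 + γ.1| ≤ |t.1| + a := le_trans (abs_add_le _ _) (by linarith)
      exact le_trans (Real.rpow_le_rpow (abs_nonneg _) h1 hc0.le) (shift_growth hc ha.le)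
    have hg2 : (|t.2.1 + γ.2.1|) ^ c ≤ (1 + a) ^ c * ((|t.2.1|) ^ c + 1) := by
      have h1 : |t.2.1 + γ.2.1| ≤ |t.2.1| + a := le_trans (abs_add_le _ _) (by linarith)
      exact le_trans (Real.rpow_le_rpow (abs_nonneg _) h1 hc0.le) (shift_growth hc ha.le)
    have hg3 : (|t.2.2 + γ.2.2|) ^ c ≤ (1 + a) ^ c * ((|t.2.2|) ^ c + 1) := by
      have h1 : |t.2.2 + γ.2.2| ≤ |t.2.2| + a := le_trans (abs_add_le _ _) (by linarith)
      exact le_trans (Real.rpow_le_rpow (abs_nonneg _) h1 hc0.le) (shift_growth hc ha.le)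
    have hsum : sN c (t + γ) ≤ (1 + a) ^ c * (sN c t + 3) := by
      unfold sN
      rw [hadd1, hadd2, hadd3]
      nlinarith [hg1, hg2, hg3]
    have hb : |sN c (t + γ) - lam| ≤ (5 * (1 + a) ^ c + 1) * (sN c t - lam) := by
      rw [abs_sub_le_iff]
      constructor
      · have h5 : sN c t + 3 ≤ 5 * (sN c t - lam) := by linarith
        have := mul_le_mul_of_nonneg_left h5 h1ac
        nlinarith [sN_nonneg c (t + γ)]
      · have := sN_nonneg c (t + γ)
        nlinarith
    have := mul_le_mul_of_nonneg_left hb hm0.le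
    have hfin : m * |sN c (t + γ) - lam| ≤ (5 * (1 + a) ^ c + 1) * u := by
      rw [huval]; linarith [this]
    have hD : (0:ℝ) ≤ 5 * (1 + a) ^ c + 1 := by linarith
    have hexp : (1 + 6 * c * a * (1 + a) ^ (c - 1) + (5 * (1 + a) ^ c + 1)) * (1 + u)
        = 1 + u + 6 * c * a * (1 + a) ^ (c - 1) + (5 * (1 + a) ^ c + 1)
          + (6 * c * a * (1 + a) ^ (c - 1) + (5 * (1 + a) ^ c + 1)) * u := by ring
    have hDu : (5 * (1 + a) ^ c + 1) * u ≤ (6 * c * a * (1 + a) ^ (c - 1)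
        + (5 * (1 + a) ^ c + 1)) * u := by
      apply mul_le_mul_of_nonneg_right _ hu0
      linarith
    linarith [hfin, hu0]


/-- The weight `ω_λ(x) = (1 + (λ^κ | |x|_c^c − λ|)^{10})⁻¹` with `κ = 3/(4c) − 1`. -/
noncomputable def omegaWeight (c lam : ℝ) (x : ℝ × ℝ × ℝ) : ℝ :=
  (1 + (lam ^ (3 / (4 * c) - 1) *
      |(|x.1| ^ c + |x.2.1| ^ c + |x.2.2| ^ c) - lam|) ^ 10)⁻¹


lemma inv_le_const_mul_inv {C w1 w2 : ℝ} (hC : 0 < C) (h1 : 0 < w1) (h2 : 0 < w2)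
    (h : w2 ≤ C * w1) : w1⁻¹ ≤ C * w2⁻¹ := by
  have heq : C * w2⁻¹ = (w2 / C)⁻¹ := by
    field_simp
  rw [heq]
  apply inv_anti₀ (by positivity)
  rw [div_le_iff₀ hC]
  nlinarith

lemma one_add_pow_ten {v : ℝ} (hv : 0 ≤ v) : (1 + v) ^ 10 ≤ 2 ^ 10 * (1 + v ^ 10) := by
  rcases le_total v 1 with h | h
  · have h1 : (1 + v) ^ 10 ≤ 2 ^ 10 := by
      apply pow_le_pow_left₀ (by linarith) (by linarith)
    nlinarith [pow_nonneg hv 10]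
  · have h1 : (1 + v) ^ 10 ≤ (2 * v) ^ 10 := by
      apply pow_le_pow_left₀ (by linarith) (by linarith)
    have h2 : (2 * v) ^ 10 = 2 ^ 10 * v ^ 10 := by ring
    nlinarith [pow_nonneg hv 10]

lemma weight_step {K u v : ℝ} (hK : 1 ≤ K) (hu : 0 ≤ u) (hv : 0 ≤ v)
    (h : u ≤ K * (1 + v)) :
    1 + u ^ 10 ≤ (1 + (2 * K) ^ 10) * (1 + v ^ 10) := by
  have hK0 : (0:ℝ) ≤ K := by linarith
  have h1 : u ^ 10 ≤ (K * (1 + v)) ^ 10 := pow_le_pow_left₀ hu h 10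
  have h2 : (K * (1 + v)) ^ 10 = K ^ 10 * (1 + v) ^ 10 := by ring
  have h3 := one_add_pow_ten hv
  have h4 : K ^ 10 * (1 + v) ^ 10 ≤ K ^ 10 * (2 ^ 10 * (1 + v ^ 10)) :=
    mul_le_mul_of_nonneg_left h3 (pow_nonneg hK0 10)
  have h5 : K ^ 10 * (2 ^ 10 * (1 + v ^ 10)) = (2 * K) ^ 10 * (1 + v ^ 10) := by ring
  have h6 : (1 + (2 * K) ^ 10) * (1 + v ^ 10) = (1 + v ^ 10) + (2 * K) ^ 10 * (1 + v ^ 10) := by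
    ring
  nlinarith [pow_nonneg hv 10]


/-- Lemma `kernel`. For `c ≥ 1` and `a > 0`,
`ω_λ(t) ≃ ω_λ(t+γ)` uniformly in `λ ≥ 1` and `|γ|_∞ ≤ a`. -/
theorem omegaWeight_comparable (c a : ℝ) (hc : 1 ≤ c) (ha : 0 < a) :
    ∃ C : ℝ, 1 ≤ C ∧ ∀ lam : ℝ, 1 ≤ lam → ∀ t γ : ℝ × ℝ × ℝ,
      max |γ.1| (max |γ.2.1| |γ.2.2|) ≤ a →
      C⁻¹ * omegaWeight c lam (t + γ) ≤ omegaWeight c lam t ∧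
        omegaWeight c lam t ≤ C * omegaWeight c lam (t + γ) := by

  obtain ⟨K, hK1, hK⟩ := key_est c a hc ha
  have hK0 : (0:ℝ) ≤ K := by linarith
  refine ⟨1 + (2 * K) ^ 10, by nlinarith [pow_nonneg (by linarith : (0:ℝ) ≤ 2 * K) 10], ?_⟩
  intro lam hlam t γ hγ
  set C := 1 + (2 * K) ^ 10 with hC
  have hC1 : (1:ℝ) ≤ C := by
    rw [hC]; nlinarith [pow_nonneg (by linarith : (0:ℝ) ≤ 2 * K) 10]
  have hC0 : (0:ℝ) < C := by linarith
  have hlam0 : (0:ℝ) < lam := by linarith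
  set m := lam ^ (3 / (4 * c) - 1) with hm
  have hm0 : (0:ℝ) < m := Real.rpow_pos_of_pos hlam0 _
  -- express omegaWeight via sN
  have homega : ∀ x : ℝ × ℝ × ℝ, omegaWeight c lam x = (1 + (m * |sN c x - lam|) ^ 10)⁻¹ := by
    intro x; rfl
  set u := m * |sN c t - lam| with hudef
  set v := m * |sN c (t + γ) - lam| with hvdef
  have hu0 : 0 ≤ u := mul_nonneg hm0.le (abs_nonneg _)
  have hv0 : 0 ≤ v := mul_nonneg hm0.le (abs_nonneg _)
  -- the two one-sided bounds
  have huv : v ≤ K * (1 + u) := hK lam hlam t γ hγ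
  have hγ' : max |(-γ).1| (max |(-γ).2.1| |(-γ).2.2|) ≤ a := by
    simpa using hγ
  have hvu' := hK lam hlam (t + γ) (-γ) hγ'
  have hback : t + γ + -γ = t := by abel
  have hvu : u ≤ K * (1 + v) := by
    rw [hback] at hvu'
    exact hvu'
  have hw1 : 1 + u ^ 10 ≤ C * (1 + v ^ 10) := by
    rw [hC]; exact weight_step hK1 hu0 hv0 hvu
  have hw2 : 1 + v ^ 10 ≤ C * (1 + u ^ 10) := by
    rw [hC]; exact weight_step hK1 hv0 hu0 huv
  have hwu0 : (0:ℝ) < 1 + u ^ 10 := by positivity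
  have hwv0 : (0:ℝ) < 1 + v ^ 10 := by positivity
  rw [homega t, homega (t + γ)]
  constructor
  · -- C⁻¹ * (1+v^10)⁻¹ ≤ (1+u^10)⁻¹
    rw [← mul_inv]
    exact inv_anti₀ hwu0 hw1
  · -- (1+u^10)⁻¹ ≤ C * (1+v^10)⁻¹
    exact inv_le_const_mul_inv hC0 hwu0 hwv0 hw2
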